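/- Let α₁,…,αₙ ∈ ℂ be distinct with Re α_j < 0, r > 1, and f : [0,∞) → ℂ continuous and bounded. Define φₙ by the recursion φ₀ = f, φ_j(t) = φ_{j−1}(t) + (1−1/r)α_j ∫₀ᵗ e^{α_j(t−τ)}φ_{j−1}(τ)dτ. Then φₙ(t) = f(t) + ∑_{j=1}^n a_j(r) ∫₀ᵗ e^{α_j(t−τ)} f(τ) dτ, where a_j(r) = (∏ₖ(α_j − αₖ/r))/(∏_{k≠j}(α_j − αₖ)). -/

import Mathlib

open Complex Finset

section Aux

open Polynomial MeasureTheory intervalIntegral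

lemma my_PF (m : ℕ) (v w : ℕ → ℂ) (hv : Set.InjOn v (range (m+1))) :
    ∏ k ∈ range m, (v m - w k) =
      (∏ k ∈ range m, (v m - v k)) +
      ∑ j ∈ range m, ((∏ k ∈ range m, (v j - w k)) /
        (∏ k ∈ (range m).erase j, (v j - v k))) * ∏ k ∈ (range m).erase j, (v m - v k) := by
  set A : ℕ → ℂ := fun j => (∏ k ∈ range m, (v j - w k)) /
        (∏ k ∈ (range m).erase j, (v j - v k)) with hA
  set P : ℂ[X] := ∏ k ∈ range m, (X - C (w k)) with hP
  set Q : ℂ[X] := ∏ k ∈ range m, (X - C (v k)) with hQ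
  set R : ℂ[X] := ∑ j ∈ range m, C (A j) * ∏ k ∈ (range m).erase j, (X - C (v k)) with hR
  have hvm : ∀ i ∈ range m, ∀ k ∈ range m, i ≠ k → v i - v k ≠ 0 := by
    intro i hi k hk hik
    have : v i ≠ v k := fun h => hik (hv (by simp at hi ⊢; omega) (by simp at hk ⊢; omega) h)
    exact sub_ne_zero.mpr this
  have hPm : P.Monic := monic_prod_of_monic _ _ (fun k _ => monic_X_sub_C _)
  have hQm : Q.Monic := monic_prod_of_monic _ _ (fun k _ => monic_X_sub_C _)
  have hPdeg : P.degree = m := by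
    rw [hP, degree_prod]
    simp [degree_X_sub_C]
  have hQdeg : Q.degree = m := by
    rw [hQ, degree_prod]
    simp [degree_X_sub_C]
  have hPQ : (P - Q).degree < (#(range m) : WithBot ℕ) := by
    rw [card_range]
    calc (P - Q).degree < P.degree :=
          degree_sub_lt (by rw [hPdeg, hQdeg]) hPm.ne_zero (by rw [hPm.leadingCoeff, hQm.leadingCoeff])
      _ = m := hPdeg
  have hRdeg : R.degree < (#(range m) : WithBot ℕ) := by
    rw [card_range]
    apply lt_of_le_of_lt (degree_sum_le _ _)
    apply Finset.sup_lt_iff (by exact_mod_cast WithBot.bot_lt_coe m) |>.mpr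
    intro j hj
    rw [← smul_eq_C_mul]
    apply lt_of_le_of_lt (degree_smul_le _ _)
    have hd : (∏ k ∈ (range m).erase j, (X - C (v k))).degree = ((#((range m).erase j)) : WithBot ℕ) := by
      rw [degree_prod]; simp [degree_X_sub_C]
    rw [hd, card_erase_of_mem hj, card_range]
    exact_mod_cast Nat.sub_lt (by have := mem_range.mp hj; omega) one_pos
  have key : P = Q + R := by
    apply Polynomial.eq_of_degree_sub_lt_of_eval_index_eq (v := v) (range m)
        (hv.mono (by intro x hx; simp at hx ⊢; omega))
    · have : P - (Q + R) = (P - Q) - R := by ring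
      rw [this]
      exact lt_of_le_of_lt (degree_sub_le _ _) (max_lt hPQ hRdeg)
    · intro i hi
      have hDne : (∏ k ∈ (range m).erase i, (v i - v k)) ≠ 0 := by
        apply Finset.prod_ne_zero_iff.mpr
        intro k hk
        exact hvm i hi k (mem_of_mem_erase hk) (Ne.symm (ne_of_mem_erase hk))
      have hQ0 : Q.eval (v i) = 0 := by
        rw [hQ, eval_prod]
        exact Finset.prod_eq_zero hi (by simp)
      have hR0 : R.eval (v i) = A i * ∏ k ∈ (range m).erase i, (v i - v k) := by
        rw [hR, eval_finset_sum]
        rw [Finset.sum_eq_single i]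
        · simp [eval_prod]
        · intro j hj hji
          simp only [eval_mul, eval_C, eval_prod, eval_sub, eval_X]
          rw [Finset.prod_eq_zero (Finset.mem_erase.mpr ⟨Ne.symm hji, hi⟩) (by ring)]
          ring
        · intro h; exact absurd hi h
      rw [eval_add, hQ0, hR0, zero_add, hA, div_mul_cancel₀ _ hDne, hP, eval_prod]
      simp
  have := congrArg (eval (v m)) key
  simpa [hP, hQ, hR, eval_prod, eval_finset_sum] using this

noncomputable def Fc (f : ℝ → ℂ) (c : ℂ) (t : ℝ) : ℂ :=
  ∫ τ in (0:ℝ)..t, Complex.exp (-c * τ) * f τ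

lemma contFc {f : ℝ → ℂ} (hf : Continuous f) (c : ℂ) : Continuous (Fc f c) :=
  intervalIntegral.continuous_primitive
    (fun a b => ((Complex.continuous_exp.comp (by continuity)).mul hf).intervalIntegrable a b) 0

lemma K_eq (f : ℝ → ℂ) (c : ℂ) (t : ℝ) :
    (∫ τ in (0:ℝ)..t, Complex.exp (c * (t - τ)) * f τ) = Complex.exp (c * t) * Fc f c t := by
  rw [Fc, ← intervalIntegral.integral_const_mul]
  apply intervalIntegral.integral_congr
  intro τ _
  dsimp only
  rw [← mul_assoc, ← Complex.exp_add]
  congr 2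
  ring

lemma contK {f : ℝ → ℂ} (hf : Continuous f) (c : ℂ) :
    Continuous (fun t : ℝ => ∫ τ in (0:ℝ)..t, Complex.exp (c * (t - τ)) * f τ) := by
  have : (fun t : ℝ => ∫ τ in (0:ℝ)..t, Complex.exp (c * (t - τ)) * f τ)
      = fun t : ℝ => Complex.exp (c * t) * Fc f c t := funext (K_eq f c)
  rw [this]
  exact (Complex.continuous_exp.comp (by continuity)).mul (contFc hf c)

lemma hasDerivFc {f : ℝ → ℂ} (hf : Continuous f) (c : ℂ) (t : ℝ) :
    HasDerivAt (Fc f c) (Complex.exp (-c * t) * f t) t := by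
  apply intervalIntegral.integral_hasDerivAt_right
    (((Complex.continuous_exp.comp (by continuity)).mul hf).intervalIntegrable _ _)
    (((Complex.continuous_exp.comp (by continuity : Continuous fun τ : ℝ => -c * τ)).mul
      hf).stronglyMeasurableAtFilter _ _)
    (((Complex.continuous_exp.comp (by continuity : Continuous fun τ : ℝ => -c * τ)).mul
      hf).continuousAt)

lemma expDeriv (c : ℂ) (x : ℝ) :
    HasDerivAt (fun x : ℝ => Complex.exp (c * x)) (c * Complex.exp (c * x)) x := by
  have h1 : HasDerivAt (fun z : ℂ => Complex.exp (c * z)) (c * Complex.exp (c * (x:ℂ))) (x:ℂ) := by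
    simpa [mul_comm, Function.comp_def] using (Complex.hasDerivAt_exp (c * x)).comp (x:ℂ)
      ((hasDerivAt_id (x:ℂ)).const_mul c)
  simpa using h1.comp_ofReal

lemma conv_lemma {f : ℝ → ℂ} (hf : Continuous f) {β γ : ℂ} (h : β ≠ γ) (t : ℝ) :
    (∫ τ in (0:ℝ)..t, Complex.exp (β * (t - τ)) *
        (∫ s in (0:ℝ)..τ, Complex.exp (γ * (τ - s)) * f s))
    = ((∫ τ in (0:ℝ)..t, Complex.exp (β * (t - τ)) * f τ) -
        (∫ τ in (0:ℝ)..t, Complex.exp (γ * (t - τ)) * f τ)) / (β - γ) := by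
  have hc : γ - β ≠ 0 := sub_ne_zero.mpr (Ne.symm h)
  set c : ℂ := γ - β with hcdef
  have step1 : (∫ τ in (0:ℝ)..t, Complex.exp (β * (t - τ)) *
        (∫ s in (0:ℝ)..τ, Complex.exp (γ * (τ - s)) * f s))
      = Complex.exp (β * t) * ∫ τ in (0:ℝ)..t, Fc f γ τ * Complex.exp (c * τ) := by
    rw [← intervalIntegral.integral_const_mul]
    apply intervalIntegral.integral_congr
    intro τ _
    dsimp only
    rw [K_eq f γ τ, ← mul_assoc, mul_comm (Complex.exp (β * ((t:ℂ) - τ))) (Complex.exp (γ * (τ:ℂ))),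
      ← Complex.exp_add, mul_comm (Fc f γ τ) (Complex.exp (c * (τ:ℂ))), ← mul_assoc,
      ← Complex.exp_add]
    congr 2
    rw [hcdef]; ring
  have ibp : (∫ τ in (0:ℝ)..t, Fc f γ τ * Complex.exp (c * τ))
      = Fc f γ t * (Complex.exp (c * t) / c) - (∫ τ in (0:ℝ)..t,
          (Complex.exp (-γ * τ) * f τ) * (Complex.exp (c * τ) / c)) := by
    have hv : ∀ x : ℝ, HasDerivAt (fun τ : ℝ => Complex.exp (c * τ) / c)
        (Complex.exp (c * x)) x := by
      intro x
      have h2 := (expDeriv c x).div_const c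
      rwa [show c * Complex.exp (c * (x:ℂ)) / c = Complex.exp (c * (x:ℂ)) by field_simp] at h2
    have := intervalIntegral.integral_mul_deriv_eq_deriv_mul
      (u := Fc f γ) (u' := fun τ => Complex.exp (-γ * τ) * f τ)
      (v := fun τ => Complex.exp (c * τ) / c) (v' := fun τ => Complex.exp (c * τ))
      (a := 0) (b := t)
      (fun x _ => hasDerivFc hf γ x)
      (fun x _ => hv x)
      (((Complex.continuous_exp.comp (by continuity)).mul hf).intervalIntegrable _ _)
      ((Complex.continuous_exp.comp (by continuity)).intervalIntegrable _ _)
    rw [this]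
    have h0 : Fc f γ 0 = 0 := by simp [Fc]
    rw [h0]
    ring
  have last : (∫ τ in (0:ℝ)..t, (Complex.exp (-γ * τ) * f τ) * (Complex.exp (c * τ) / c))
      = Fc f β t / c := by
    have : (∫ τ in (0:ℝ)..t, (Complex.exp (-γ * τ) * f τ) * (Complex.exp (c * τ) / c))
        = ∫ τ in (0:ℝ)..t, (Complex.exp (-β * τ) * f τ) / c := by
      apply intervalIntegral.integral_congr
      intro τ _
      dsimp only
      have e : Complex.exp (-γ * (τ:ℂ)) * Complex.exp (c * (τ:ℂ)) = Complex.exp (-β * (τ:ℂ)) := by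
        rw [← Complex.exp_add]; congr 1; rw [hcdef]; ring
      rw [← e]; ring
    rw [this, intervalIntegral.integral_div, Fc]
  rw [step1, ibp, last, K_eq f β t, K_eq f γ t]
  have e : Complex.exp (β * (t:ℂ)) * Complex.exp (c * (t:ℂ)) = Complex.exp (γ * (t:ℂ)) := by
    rw [← Complex.exp_add]; congr 1; rw [hcdef]; ring
  have hbg : β - γ ≠ 0 := sub_ne_zero.mpr h
  rw [show Complex.exp (β * (t:ℂ)) * (Fc f γ t * (Complex.exp (c * (t:ℂ)) / c) - Fc f β t / c)
      = ((Complex.exp (β * (t:ℂ)) * Complex.exp (c * (t:ℂ))) * Fc f γ t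
        - Complex.exp (β * (t:ℂ)) * Fc f β t) / c from by ring, e,
    div_eq_div_iff hc hbg, hcdef]
  ring

lemma halg (m : ℕ) (A K d : ℕ → ℂ) (b Km : ℂ) :
    (∑ j ∈ range m, A j * K j) + b * (Km + ∑ j ∈ range m, A j * ((Km - K j) / d j))
      = (∑ j ∈ range m, (A j * (1 - b / d j)) * K j)
        + (b * (1 + ∑ j ∈ range m, A j / d j)) * Km := by
  induction m with
  | zero => simp only [Finset.range_zero, Finset.sum_empty]; ring
  | succ m ih => simp only [Finset.sum_range_succ]; linear_combination ih

end Aux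

/-- Equivalence between the stable recursion (3.2.3) and the explicit
partial-fraction formula (2.12): φₙ(t) = f(t) + ∑ⱼ aⱼ(r) ∫₀ᵗ e^{αⱼ(t−τ)}f(τ)dτ. -/
theorem recursion_eq_partial_fraction (n : ℕ) (α : Fin n → ℂ)
    (hα : Function.Injective α) (hαre : ∀ j, (α j).re < 0)
    (r : ℝ) (hr : 1 < r)
    (f : ℝ → ℂ) (hf : Continuous f) (M : ℝ)
    (hbd : ∀ t : ℝ, 0 ≤ t → ‖f t‖ ≤ M)
    (φ : ℕ → ℝ → ℂ) (hφ0 : φ 0 = f)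
    (hφ : ∀ (j : Fin n) (t : ℝ),
      φ (j + 1) t = φ j t + (1 - 1 / (r : ℂ)) * α j *
        ∫ τ in (0:ℝ)..t, Complex.exp (α j * (t - τ)) * φ j τ)
    (a : Fin n → ℂ)
    (ha : ∀ j, a j = (∏ k, (α j - α k / (r : ℂ))) /
      (∏ k ∈ univ.erase j, (α j - α k))) :
    ∀ t : ℝ, 0 ≤ t →
      φ n t = f t + ∑ j, a j *
        ∫ τ in (0:ℝ)..t, Complex.exp (α j * (t - τ)) * f τ := by
  classical
  set α' : ℕ → ℂ := fun j => if h : j < n then α ⟨j, h⟩ else 0 with hα'def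
  have hα'lt : ∀ (j : ℕ) (h : j < n), α' j = α ⟨j, h⟩ := fun j h => dif_pos h
  have hα'ne : ∀ j k : ℕ, j < n → k < n → j ≠ k → α' j ≠ α' k := by
    intro j k hj hk hjk
    rw [hα'lt j hj, hα'lt k hk]
    intro hEq
    exact hjk (by simpa using congrArg Fin.val (hα hEq))
  have hrC : (r : ℂ) ≠ 0 := by
    exact_mod_cast Complex.ofReal_ne_zero.mpr (by linarith)
  set A : ℕ → ℕ → ℂ := fun m j => (∏ k ∈ range m, (α' j - α' k / (r:ℂ))) /
      (∏ k ∈ (range m).erase j, (α' j - α' k)) with hAdef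
  have main : ∀ m, m ≤ n → ∀ s : ℝ, φ m s = f s + ∑ j ∈ range m, A m j *
      ∫ τ in (0:ℝ)..s, Complex.exp (α' j * (s - τ)) * f τ := by
    intro m
    induction m with
    | zero => intro _ s; simp [hφ0]
    | succ m ih =>
      intro hm s
      have hmn : m < n := hm
      have ihm := ih hmn.le
      have hblt : ∀ j ∈ range m, j < n := fun j hj => lt_trans (mem_range.mp hj) hmn
      have hdne : ∀ j ∈ range m, α' m - α' j ≠ 0 := fun j hj =>
        sub_ne_zero.mpr (hα'ne m j hmn (hblt j hj) (by have := mem_range.mp hj; omega))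
      have hrec : φ (m+1) s = φ m s + (1 - 1/(r:ℂ)) * α' m *
          ∫ τ in (0:ℝ)..s, Complex.exp (α' m * (s - τ)) * φ m τ := by
        have h0 := hφ ⟨m, hmn⟩ s
        rw [← hα'lt m hmn] at h0
        exact h0
      have hexp_cont : ∀ (c : ℂ), Continuous (fun τ : ℝ => Complex.exp (c * (s - τ))) :=
        fun c => Complex.continuous_exp.comp
          (continuous_const.mul (continuous_const.sub Complex.continuous_ofReal))
      have split : (∫ τ in (0:ℝ)..s, Complex.exp (α' m * (s - τ)) * φ m τ)
          = (∫ τ in (0:ℝ)..s, Complex.exp (α' m * (s - τ)) * f τ)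
            + ∑ j ∈ range m, A m j * (((∫ τ in (0:ℝ)..s, Complex.exp (α' m * (s - τ)) * f τ)
              - ∫ τ in (0:ℝ)..s, Complex.exp (α' j * (s - τ)) * f τ) / (α' m - α' j)) := by
        have e1 : (∫ τ in (0:ℝ)..s, Complex.exp (α' m * (s - τ)) * φ m τ)
            = ∫ τ in (0:ℝ)..s, (Complex.exp (α' m * (s - τ)) * f τ
              + ∑ j ∈ range m, A m j * (Complex.exp (α' m * (s - τ)) *
                ∫ σ in (0:ℝ)..τ, Complex.exp (α' j * (τ - σ)) * f σ)) := by
          apply intervalIntegral.integral_congr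
          intro τ _
          dsimp only
          rw [ihm τ, mul_add, Finset.mul_sum]
          congr 1
          apply Finset.sum_congr rfl
          intro j _
          ring
        rw [e1, intervalIntegral.integral_add
          (f := fun τ : ℝ => Complex.exp (α' m * (s - τ)) * f τ)
          (g := fun τ : ℝ => ∑ j ∈ range m, A m j * (Complex.exp (α' m * (s - τ)) *
                  ∫ σ in (0:ℝ)..τ, Complex.exp (α' j * (τ - σ)) * f σ))
          (((hexp_cont _).mul hf).intervalIntegrable _ _)
          ((continuous_finset_sum _ (fun j _ => continuous_const.mul
            ((hexp_cont _).mul (contK hf (α' j))))).intervalIntegrable _ _),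
          intervalIntegral.integral_finset_sum
            (f := fun j (τ : ℝ) => A m j * (Complex.exp (α' m * (s - τ)) *
                  ∫ σ in (0:ℝ)..τ, Complex.exp (α' j * (τ - σ)) * f σ)) (fun j _ => (continuous_const.mul
            ((hexp_cont _).mul (contK hf (α' j)))).intervalIntegrable _ _)]
        congr 1
        apply Finset.sum_congr rfl
        intro j hj
        rw [intervalIntegral.integral_const_mul]
        congr 1
        exact conv_lemma hf (hα'ne m j hmn (hblt j hj) (by have := mem_range.mp hj; omega)) s
      have hC1 : ∀ j ∈ range m, A (m+1) j
          = A m j * (1 - ((1 - 1/(r:ℂ)) * α' m) / (α' m - α' j)) := by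
        intro j hj
        have hjm : j ≠ m := (mem_range.mp hj).ne
        have hmem : m ∉ (range m).erase j := fun hmem => notMem_range_self (mem_of_mem_erase hmem)
        simp only [hAdef]
        rw [Finset.range_add_one, Finset.erase_insert_of_ne (Ne.symm hjm),
          Finset.prod_insert notMem_range_self, Finset.prod_insert hmem,
          ← div_mul_div_comm, mul_comm]
        congr 1
        have h1 : α' j - α' m ≠ 0 :=
          sub_ne_zero.mpr (hα'ne j m (hblt j hj) hmn hjm)
        have h2 := hdne j hj
        field_simp
        ring
      have hC2 : A (m+1) m = ((1 - 1/(r:ℂ)) * α' m) *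
          (1 + ∑ j ∈ range m, A m j / (α' m - α' j)) := by
        have hinj : Set.InjOn α' (range (m+1)) := by
          intro x hx y hy hxy
          by_contra hne
          exact hα'ne x y (by simp at hx; omega) (by simp at hy; omega) hne hxy
        have hPF := my_PF m α' (fun k => α' k / (r:ℂ)) hinj
        have hQne : (∏ k ∈ range m, (α' m - α' k)) ≠ 0 :=
          Finset.prod_ne_zero_iff.mpr (fun k hk => hdne k hk)
        have hS : ∀ j ∈ range m,
            ((∏ k ∈ range m, (α' j - α' k / (r:ℂ))) /
              (∏ k ∈ (range m).erase j, (α' j - α' k))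
              * ∏ k ∈ (range m).erase j, (α' m - α' k)) / (∏ k ∈ range m, (α' m - α' k))
            = A m j / (α' m - α' j) := by
          intro j hj
          have hEne : (∏ k ∈ (range m).erase j, (α' m - α' k)) ≠ 0 :=
            Finset.prod_ne_zero_iff.mpr (fun k hk => hdne k (mem_of_mem_erase hk))
          rw [← Finset.mul_prod_erase (range m) (fun k => α' m - α' k) hj]
          simp only [hAdef]
          rw [mul_comm (α' m - α' j) _, ← div_div, mul_div_assoc,
            div_self hEne, mul_one]
        calc A (m+1) m = ((α' m - α' m / (r:ℂ)) * ∏ k ∈ range m, (α' m - α' k / (r:ℂ)))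
              / (∏ k ∈ range m, (α' m - α' k)) := by
              simp only [hAdef]
              rw [Finset.range_add_one, Finset.prod_insert notMem_range_self,
                Finset.erase_insert notMem_range_self]
          _ = ((1 - 1/(r:ℂ)) * α' m) * ((∏ k ∈ range m, (α' m - α' k / (r:ℂ)))
              / (∏ k ∈ range m, (α' m - α' k))) := by
              rw [mul_div_assoc]
              congr 2
              field_simp
          _ = ((1 - 1/(r:ℂ)) * α' m) * (1 + ∑ j ∈ range m, A m j / (α' m - α' j)) := by
              congr 1
              rw [hPF, add_div, div_self hQne, Finset.sum_div]
              congr 1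
              exact Finset.sum_congr rfl hS
      rw [hrec, ihm s, split, Finset.sum_range_succ, hC2,
        show (∑ j ∈ range m, A (m+1) j * ∫ τ in (0:ℝ)..s,
            Complex.exp (α' j * (s - τ)) * f τ)
          = ∑ j ∈ range m, (A m j * (1 - ((1 - 1/(r:ℂ)) * α' m) / (α' m - α' j))) *
            ∫ τ in (0:ℝ)..s, Complex.exp (α' j * (s - τ)) * f τ from
          Finset.sum_congr rfl (fun j hj => by rw [hC1 j hj])]
      have H := halg m (A m)
        (fun j => ∫ τ in (0:ℝ)..s, Complex.exp (α' j * (s - τ)) * f τ)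
        (fun j => α' m - α' j) ((1 - 1/(r:ℂ)) * α' m)
        (∫ τ in (0:ℝ)..s, Complex.exp (α' m * (s - τ)) * f τ)
      linear_combination H
  intro t _
  rw [main n le_rfl t]
  congr 1
  rw [← Fin.sum_univ_eq_sum_range (fun j => A n j *
    ∫ τ in (0:ℝ)..t, Complex.exp (α' j * (t - τ)) * f τ) n]
  apply Finset.sum_congr rfl
  intro j _
  have hj : (j : ℕ) < n := j.isLt
  have hval : α' (j : ℕ) = α j := by rw [hα'lt _ hj]
  have hnum : (∏ k ∈ range n, (α' (j:ℕ) - α' k / (r:ℂ))) = ∏ k, (α j - α k / (r:ℂ)) := by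
    rw [← Fin.prod_univ_eq_prod_range (fun k => α' (j:ℕ) - α' k / (r:ℂ)) n]
    apply Finset.prod_congr rfl
    intro k _
    rw [hval, hα'lt _ k.isLt]
  have hden : (∏ k ∈ (range n).erase (j:ℕ), (α' (j:ℕ) - α' k))
      = ∏ k ∈ univ.erase j, (α j - α k) := by
    rw [show (∏ k ∈ (range n).erase (j:ℕ), (α' (j:ℕ) - α' k))
        = ∏ k ∈ (range n).erase (j:ℕ), (if k = (j:ℕ) then 1 else (α j - α' k)) from
      Finset.prod_congr rfl (fun k hk => by
        rw [if_neg (Finset.ne_of_mem_erase hk), hval]),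
      Finset.prod_erase (range n) (f := fun k => if k = (j:ℕ) then 1 else (α j - α' k)) (if_pos rfl)]
    rw [show (∏ k ∈ univ.erase j, (α j - α k))
        = ∏ k ∈ univ.erase j, (if k = j then 1 else (α j - α k)) from
      Finset.prod_congr rfl (fun k hk => by rw [if_neg (Finset.ne_of_mem_erase hk)]),
      Finset.prod_erase univ (f := fun k => if k = j then 1 else (α j - α k)) (if_pos rfl)]
    rw [← Fin.prod_univ_eq_prod_range (fun k => if k = (j:ℕ) then 1 else (α j - α' k)) n]
    apply Finset.prod_congr rfl
    intro k _
    by_cases hkj : k = j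
    · subst hkj; simp
    · rw [if_neg hkj, if_neg (by simpa [Fin.val_inj] using hkj), hα'lt _ k.isLt]
  rw [ha j, hAdef]
  simp only
  rw [hnum, hden, hval]
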